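/- For the unique γ† > 0 with 2γ†² + γ† = (1+γ†)² ln(1+γ†), one has f(γ†) > 0.4675, where f(γ) = ln(1+γ) − γ/(1+γ). -/

import Mathlib

open Real

noncomputable def gaux : ℝ → ℝ := fun x => Real.log (1 + x) - (2 * x ^ 2 + x) / (1 + x) ^ 2

lemma gaux_hasDeriv {x : ℝ} (hx : -1 < x) :
    HasDerivAt gaux ((x ^ 2 - x) / (1 + x) ^ 3) x := by
  have hne : (1 : ℝ) + x ≠ 0 := by linarith
  have h1 : HasDerivAt (fun y : ℝ => Real.log (1 + y)) (1 / (1 + x)) x := by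
    have hplus : HasDerivAt (fun y : ℝ => 1 + y) 1 x := by
      simpa using (hasDerivAt_id x).const_add (1 : ℝ)
    simpa [one_div] using hplus.log hne
  have hnum : HasDerivAt (fun y : ℝ => 2 * y ^ 2 + y) (4 * x + 1) x := by
    have h := ((hasDerivAt_pow 2 x).const_mul (2 : ℝ)).fun_add (hasDerivAt_id x)
    refine h.congr_deriv ?_
    ring
  have hden : HasDerivAt (fun y : ℝ => (1 + y) ^ 2) (2 * (1 + x)) x := by
    have hplus : HasDerivAt (fun y : ℝ => 1 + y) 1 x := by
      simpa using (hasDerivAt_id x).const_add (1 : ℝ)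
    simpa using (hplus.fun_pow 2)
  have hdne : ((1 : ℝ) + x) ^ 2 ≠ 0 := pow_ne_zero 2 hne
  have h2 := hnum.fun_div hden hdne
  have := h1.fun_sub h2
  refine this.congr_deriv ?_
  field_simp
  ring

lemma gaux_cont : ContinuousOn gaux (Set.Icc (0 : ℝ) 2.1623) := by
  intro x hx
  have hx0 : (0 : ℝ) ≤ x := hx.1
  exact ((gaux_hasDeriv (by linarith : -1 < x)).continuousAt).continuousWithinAt

lemma gaux_anti : StrictAntiOn gaux (Set.Icc (0 : ℝ) 1) := by
  apply strictAntiOn_of_deriv_neg (convex_Icc 0 1)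
  · exact gaux_cont.mono (by intro x hx; exact ⟨hx.1, by linarith [hx.2]⟩)
  · intro x hx
    rw [interior_Icc] at hx
    rw [(gaux_hasDeriv (by linarith [hx.1] : -1 < x)).deriv]
    apply div_neg_of_neg_of_pos
    · nlinarith [hx.1, hx.2]
    · have : (0:ℝ) < 1 + x := by linarith [hx.1]
      positivity

lemma gaux_mono : StrictMonoOn gaux (Set.Icc (1 : ℝ) 2.1623) := by
  apply strictMonoOn_of_deriv_pos (convex_Icc 1 2.1623)
  · exact gaux_cont.mono (by intro x hx; exact ⟨by linarith [hx.1], hx.2⟩)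
  · intro x hx
    rw [interior_Icc] at hx
    rw [(gaux_hasDeriv (by linarith [hx.1] : -1 < x)).deriv]
    apply div_pos
    · nlinarith [hx.1]
    · have : (0:ℝ) < 1 + x := by linarith [hx.1]
      positivity

lemma gaux_zero : gaux 0 = 0 := by
  simp [gaux]

lemma gaux_c_neg : gaux 2.1623 < 0 := by
  have h1 : (1 : ℝ) + 2.1623 = 3.1623 := by norm_num
  have hrhs : (2 * (2.1623 : ℝ) ^ 2 + 2.1623) / (1 + 2.1623) ^ 2
      = 1151338258 / 1000014129 := by norm_num
  rw [gaux, sub_neg, hrhs, h1]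
  rw [Real.log_lt_iff_lt_exp (by norm_num)]
  have hle : (1.1513 : ℝ) ≤ 1151338258 / 1000014129 := by norm_num
  have hsum : ∑ i ∈ Finset.range 11, (1.1513 : ℝ) ^ i / (Nat.factorial i) ≤
      Real.exp 1.1513 := Real.sum_le_exp_of_nonneg (by norm_num) 11
  have hval : (3.1623 : ℝ) < ∑ i ∈ Finset.range 11, (1.1513 : ℝ) ^ i / (Nat.factorial i) := by
    simp only [Finset.sum_range_succ, Finset.sum_range_zero, Nat.factorial]
    norm_num
  calc (3.1623 : ℝ) < ∑ i ∈ Finset.range 11, (1.1513 : ℝ) ^ i / (Nat.factorial i) := hval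
    _ ≤ Real.exp 1.1513 := hsum
    _ ≤ Real.exp (1151338258 / 1000014129) := Real.exp_le_exp.mpr hle

theorem stmt14 (γd : ℝ) (hγd : 0 < γd)
    (hroot : 2 * γd ^ 2 + γd = (1 + γd) ^ 2 * Real.log (1 + γd)) :
    Real.log (1 + γd) - γd / (1 + γd) > 0.4675 := by
  have hne : (1 : ℝ) + γd ≠ 0 := by positivity
  have hne2 : ((1 : ℝ) + γd) ^ 2 ≠ 0 := pow_ne_zero 2 hne
  have hgzero : gaux γd = 0 := by
    rw [gaux, sub_eq_zero, eq_div_iff hne2, mul_comm]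
    linarith
  have hγc : 2.1623 < γd := by
    by_contra hle
    push_neg at hle
    rcases le_or_gt γd 1 with h1 | h1
    · have := gaux_anti (Set.mem_Icc.mpr ⟨le_refl 0, by norm_num⟩)
        (Set.mem_Icc.mpr ⟨hγd.le, h1⟩) hγd
      rw [gaux_zero, hgzero] at this
      exact lt_irrefl 0 this
    · have := gaux_mono.monotoneOn (Set.mem_Icc.mpr ⟨h1.le, hle⟩)
        (Set.mem_Icc.mpr ⟨by norm_num, le_refl _⟩) hle
      rw [hgzero] at this
      exact absurd (this.trans_lt gaux_c_neg) (lt_irrefl 0)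
  have hlog : Real.log (1 + γd) = (2 * γd ^ 2 + γd) / (1 + γd) ^ 2 := by
    rw [eq_div_iff hne2, mul_comm]
    linarith
  have heq : (2 * γd ^ 2 + γd) / (1 + γd) ^ 2 - γd / (1 + γd) = γd ^ 2 / (1 + γd) ^ 2 := by
    field_simp
    ring
  rw [hlog, heq, gt_iff_lt, lt_div_iff₀ (by positivity)]
  nlinarith [sq_nonneg (γd - 2.1623)]
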